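/- In the birational representation above, the translation $T_1=\pi s_2 s_1$ acts on parameters by $(a_0,a_1,a_2)\mapsto(qa_0,q^{-1}a_1,a_2)$ where $q=a_0a_1a_2$, and acts on the $f$-variables by $T_1(f_1)=\frac{qc^2}{f_1 f_0}\cdot\frac{1+a_0 f_0}{a_0+f_0}$ and $T_1(f_0)=\frac{qc^2}{f_0\,T_1(f_1)}\cdot\frac{1+a_2a_0\,T_1(f_1)}{a_2a_0+T_1(f_1)}$, where $qc^2=f_0f_1f_2$. -/

import Mathlib

/-- The Cartan matrix of type $A_2^{(1)}$: $a_{ii}=2$, $a_{ij}=-1$ for $i\neq j$. -/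
def cartanA2 (i j : ZMod 3) : ℤ := if i = j then 2 else -1

/-- The orientation matrix $U$: $u_{01}=u_{12}=u_{20}=1$, skew-symmetric, $u_{ii}=0$. -/
def orientU (i j : ZMod 3) : ℤ := if j = i + 1 then 1 else if j = i - 1 then -1 else 0

/-- The transformation $s_i$ on the variables $(a;f)$:
$s_i(a_j)=a_j a_i^{-a_{ij}}$, $s_i(f_j)=f_j\left(\frac{a_i+f_i}{1+a_if_i}\right)^{u_{ij}}$. -/
noncomputable def weylS {K : Type*} [Field K] (i : ZMod 3)
    (x : (ZMod 3 → K) × (ZMod 3 → K)) : (ZMod 3 → K) × (ZMod 3 → K) :=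
  (fun j => x.1 j * x.1 i ^ (-(cartanA2 i j)),
   fun j => x.2 j * ((x.1 i + x.2 i) / (1 + x.1 i * x.2 i)) ^ (orientU i j))

/-- The diagram rotation $\pi$: $\pi(a_i)=a_{i+1}$, $\pi(f_i)=f_{i+1}$. -/
def weylPi {K : Type*} (x : (ZMod 3 → K) × (ZMod 3 → K)) :
    (ZMod 3 → K) × (ZMod 3 → K) :=
  (fun j => x.1 (j + 1), fun j => x.2 (j + 1))

/-- The translation $T_1=\pi s_2 s_1$ (acting on the variables from the right). -/
noncomputable def mapT1 {K : Type*} [Field K] (x : (ZMod 3 → K) × (ZMod 3 → K)) :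
    (ZMod 3 → K) × (ZMod 3 → K) := weylS 1 (weylS 2 (weylPi x))

theorem stmt17 {K : Type*} [Field K] (a f a' f' : ZMod 3 → K)
    (ha : ∀ i, a i ≠ 0) (hf : ∀ i, f i ≠ 0)
    (h1 : ∀ i, a i + f i ≠ 0) (h2 : ∀ i, 1 + a i * f i ≠ 0)
    (hT : mapT1 (a, f) = (a', f'))
    (hden : a 2 * a 0 + f' 1 ≠ 0) :
    a' 0 = (a 0 * a 1 * a 2) * a 0 ∧
    a' 1 = a 1 / (a 0 * a 1 * a 2) ∧
    a' 2 = a 2 ∧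
    f' 1 = (f 0 * f 1 * f 2) / (f 1 * f 0) * ((1 + a 0 * f 0) / (a 0 + f 0)) ∧
    f' 0 = (f 0 * f 1 * f 2) / (f 0 * f' 1) * ((1 + a 2 * a 0 * f' 1) / (a 2 * a 0 + f' 1)) := by

  have hA : ∀ j, a' j = (mapT1 (a, f)).1 j := fun j => (congrFun (congrArg Prod.fst hT) j).symm
  have hF : ∀ j, f' j = (mapT1 (a, f)).2 j := fun j => (congrFun (congrArg Prod.snd hT) j).symm
  have zmods : True := trivial
  have e1 : f' 1 = f 2 * (1 + a 0 * f 0) / (a 0 + f 0) := by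
    rw [hF 1]
    simp only [mapT1, weylS, weylPi, cartanA2, orientU,
      show (0:ZMod 3)+1 = 1 by decide, show (1:ZMod 3)+1 = 2 by decide,
      show (2:ZMod 3)+1 = 0 by decide, show (1:ZMod 3)-1 = 0 by decide,
      show (2:ZMod 3)-1 = 1 by decide,
      show (0:ZMod 3) ≠ 1 by decide, show (0:ZMod 3) ≠ 2 by decide,
      show (1:ZMod 3) ≠ 0 by decide, show (1:ZMod 3) ≠ 2 by decide,
      show (2:ZMod 3) ≠ 0 by decide, show (2:ZMod 3) ≠ 1 by decide,
      ite_true, ite_false, zpow_zero, zpow_neg, zpow_one, neg_neg, zpow_two, inv_inv]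
    rw [inv_div]
    field_simp
  refine ⟨?_, ?_, ?_, ?_, ?_⟩
  · rw [hA 0]
    simp only [mapT1, weylS, weylPi, cartanA2, orientU,
      show (0:ZMod 3)+1 = 1 by decide, show (1:ZMod 3)+1 = 2 by decide,
      show (2:ZMod 3)+1 = 0 by decide, show (1:ZMod 3)-1 = 0 by decide,
      show (2:ZMod 3)-1 = 1 by decide,
      show (0:ZMod 3) ≠ 1 by decide, show (0:ZMod 3) ≠ 2 by decide,
      show (1:ZMod 3) ≠ 0 by decide, show (1:ZMod 3) ≠ 2 by decide,
      show (2:ZMod 3) ≠ 0 by decide, show (2:ZMod 3) ≠ 1 by decide,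
      ite_true, ite_false, zpow_zero, zpow_neg, zpow_one, neg_neg, zpow_two, inv_inv]
    ring
  · rw [hA 1]
    simp only [mapT1, weylS, weylPi, cartanA2, orientU,
      show (0:ZMod 3)+1 = 1 by decide, show (1:ZMod 3)+1 = 2 by decide,
      show (2:ZMod 3)+1 = 0 by decide, show (1:ZMod 3)-1 = 0 by decide,
      show (2:ZMod 3)-1 = 1 by decide,
      show (0:ZMod 3) ≠ 1 by decide, show (0:ZMod 3) ≠ 2 by decide,
      show (1:ZMod 3) ≠ 0 by decide, show (1:ZMod 3) ≠ 2 by decide,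
      show (2:ZMod 3) ≠ 0 by decide, show (2:ZMod 3) ≠ 1 by decide,
      ite_true, ite_false, zpow_zero, zpow_neg, zpow_one, neg_neg, zpow_two, inv_inv]
    field_simp [ha 0, ha 1, ha 2]
  · rw [hA 2]
    simp only [mapT1, weylS, weylPi, cartanA2, orientU,
      show (0:ZMod 3)+1 = 1 by decide, show (1:ZMod 3)+1 = 2 by decide,
      show (2:ZMod 3)+1 = 0 by decide, show (1:ZMod 3)-1 = 0 by decide,
      show (2:ZMod 3)-1 = 1 by decide,
      show (0:ZMod 3) ≠ 1 by decide, show (0:ZMod 3) ≠ 2 by decide,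
      show (1:ZMod 3) ≠ 0 by decide, show (1:ZMod 3) ≠ 2 by decide,
      show (2:ZMod 3) ≠ 0 by decide, show (2:ZMod 3) ≠ 1 by decide,
      ite_true, ite_false, zpow_zero, zpow_neg, zpow_one, neg_neg, zpow_two, inv_inv]
    field_simp [ha 0]
  · rw [e1]
    field_simp [hf 0, hf 1, h1 0]
  · rw [hF 0]
    simp only [mapT1, weylS, weylPi, cartanA2, orientU,
      show (0:ZMod 3)+1 = 1 by decide, show (1:ZMod 3)+1 = 2 by decide,
      show (2:ZMod 3)+1 = 0 by decide, show (1:ZMod 3)-1 = 0 by decide,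
      show (2:ZMod 3)-1 = 1 by decide,
      show (0:ZMod 3) ≠ 1 by decide, show (0:ZMod 3) ≠ 2 by decide,
      show (1:ZMod 3) ≠ 0 by decide, show (1:ZMod 3) ≠ 2 by decide,
      show (2:ZMod 3) ≠ 0 by decide, show (2:ZMod 3) ≠ 1 by decide,
      ite_true, ite_false, zpow_zero, zpow_neg, zpow_one, neg_neg, zpow_two, inv_inv]
    rw [e1] at hden ⊢
    rw [inv_div, inv_div]
    have hden' : a 2 * a 0 * (a 0 + f 0) + f 2 * (1 + a 0 * f 0) ≠ 0 := by
      rw [add_div' _ _ _ (h1 0)] at hden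
      exact fun h => hden (by rw [h, zero_div])
    field_simp [hf 0, hf 1, hf 2, h1 0, h2 0, hden']
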